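/- arXiv:0910.1784 — 3 statements merged into one kernel-verified Lean document; each statement's English description precedes it below -/
import Mathlib

section
/- For a symmetric positive definite real d×d matrix x, the second partial derivatives of the determinant satisfy ∂²det(x)/(∂x_{ij} ∂x_{kl}) = det(x)·[(x^{-1})_{kl}(x^{-1})_{ij} − (x^{-1})_{il}(x^{-1})_{jk}]. -/
open Matrix Finset

attribute [local instance] Matrix.frobeniusNormedAddCommGroup Matrix.frobeniusNormedSpace

section aux
attribute [local instance] Matrix.frobeniusNormedRing Matrix.frobeniusNormedAlgebra

variable {d : ℕ}

noncomputable def entryCLM (p q : Fin d) : Matrix (Fin d) (Fin d) ℝ →L[ℝ] ℝ :=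
  LinearMap.toContinuousLinearMap
    { toFun := fun m => m p q
      map_add' := fun _ _ => rfl
      map_smul' := fun _ _ => rfl }

@[simp] lemma entryCLM_apply (p q : Fin d) (m : Matrix (Fin d) (Fin d) ℝ) :
    entryCLM p q m = m p q := rfl

noncomputable def detDerivCLM (A : Matrix (Fin d) (Fin d) ℝ) :
    Matrix (Fin d) (Fin d) ℝ →L[ℝ] ℝ :=
  LinearMap.toContinuousLinearMap
    { toFun := fun H => (A.adjugate * H).trace
      map_add' := fun _ _ => by simp [Matrix.mul_add]
      map_smul' := fun _ _ => by simp [Matrix.mul_smul] }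

@[simp] lemma detDerivCLM_apply (A H : Matrix (Fin d) (Fin d) ℝ) :
    detDerivCLM A H = (A.adjugate * H).trace := rfl

theorem hasFDerivAt_det' (A : Matrix (Fin d) (Fin d) ℝ) :
    HasFDerivAt (fun m : Matrix (Fin d) (Fin d) ℝ => m.det) (detDerivCLM A) A := by
  have h : HasFDerivAt
      (fun m : Matrix (Fin d) (Fin d) ℝ =>
        ∑ σ : Equiv.Perm (Fin d), ((Equiv.Perm.sign σ : ℤ) : ℝ) * ∏ i, m (σ i) i)
      (∑ σ : Equiv.Perm (Fin d), ((Equiv.Perm.sign σ : ℤ) : ℝ) •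
        ∑ i, (∏ j ∈ univ.erase i, A (σ j) j) • entryCLM (σ i) i) A := by
    apply HasFDerivAt.fun_sum
    intro σ _
    exact (HasFDerivAt.finset_prod (fun i _ => (entryCLM (σ i) i).hasFDerivAt)).const_mul _
  have hfun : (fun m : Matrix (Fin d) (Fin d) ℝ =>
      ∑ σ : Equiv.Perm (Fin d), ((Equiv.Perm.sign σ : ℤ) : ℝ) * ∏ i, m (σ i) i)
      = fun m : Matrix (Fin d) (Fin d) ℝ => m.det := by
    funext m
    rw [Matrix.det_apply]
    simp [Units.smul_def, zsmul_eq_mul]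
  rw [hfun] at h
  convert h using 1
  ext H
  simp only [detDerivCLM_apply, ContinuousLinearMap.coe_sum', Finset.sum_apply,
    ContinuousLinearMap.coe_smul', Pi.smul_apply, entryCLM_apply, smul_eq_mul]
  -- RHS = ∑ σ, c σ * ∑ i, (∏_{j≠i} A (σ j) j) * H (σ i) i
  have key : ∀ i : Fin d, (A.updateCol i (fun q => H q i)).det
      = ∑ σ : Equiv.Perm (Fin d),
          ((Equiv.Perm.sign σ : ℤ) : ℝ) * (H (σ i) i * ∏ j ∈ univ.erase i, A (σ j) j) := by
    intro i
    rw [Matrix.det_apply]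
    refine Finset.sum_congr rfl fun σ _ => ?_
    rw [Units.smul_def, zsmul_eq_mul]
    congr 1
    rw [← Finset.mul_prod_erase univ _ (mem_univ i)]
    congr 1
    · simp [Matrix.updateCol_apply]
    · refine Finset.prod_congr rfl fun j hj => ?_
      simp [Matrix.updateCol_apply, (Finset.mem_erase.mp hj).1]
  have tr : (A.adjugate * H).trace = ∑ i, (A.updateCol i (fun q => H q i)).det := by
    rw [Matrix.trace]
    refine Finset.sum_congr rfl fun i _ => ?_
    rw [Matrix.diag_apply, ← Matrix.cramer_apply]
    rw [Matrix.cramer_eq_adjugate_mulVec]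
    simp [Matrix.mulVec, dotProduct, Matrix.mul_apply]
  rw [tr]
  simp_rw [key]
  rw [Finset.sum_comm]
  refine Finset.sum_congr rfl fun σ _ => ?_
  rw [Finset.mul_sum]
  refine Finset.sum_congr rfl fun i _ => ?_
  ring

noncomputable def trMulCLM (E : Matrix (Fin d) (Fin d) ℝ) :
    Matrix (Fin d) (Fin d) ℝ →L[ℝ] ℝ :=
  LinearMap.toContinuousLinearMap
    { toFun := fun B => (B * E).trace
      map_add' := fun _ _ => by simp [Matrix.add_mul]
      map_smul' := fun _ _ => by simp [Matrix.smul_mul] }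

@[simp] lemma trMulCLM_apply (E B : Matrix (Fin d) (Fin d) ℝ) :
    trMulCLM E B = (B * E).trace := rfl

theorem det_second_partial_deriv_posDef_aux {d : ℕ}
    (x : Matrix (Fin d) (Fin d) ℝ) (hx : x.PosDef) (i j k l : Fin d) :
    fderiv ℝ (fun m : Matrix (Fin d) (Fin d) ℝ =>
        fderiv ℝ (fun m' : Matrix (Fin d) (Fin d) ℝ => m'.det) m
          (Matrix.single k l 1)) x (Matrix.single i j 1)
      = x.det * (x⁻¹ k l * x⁻¹ i j - x⁻¹ i l * x⁻¹ j k) := by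
  set E : Matrix (Fin d) (Fin d) ℝ := Matrix.single k l 1 with hE
  have hdetx : x.det ≠ 0 := hx.det_pos.ne'
  have hxu : IsUnit x := (Matrix.isUnit_iff_isUnit_det x).2 (isUnit_iff_ne_zero.2 hdetx)
  -- Step 1: identify inner derivative
  have h1 : (fun m : Matrix (Fin d) (Fin d) ℝ =>
      fderiv ℝ (fun m' : Matrix (Fin d) (Fin d) ℝ => m'.det) m E)
      = fun m => (m.adjugate * E).trace := by
    funext m
    rw [(hasFDerivAt_det' m).fderiv]
    rfl
  rw [h1]
  -- Step 2: eventually equal to det m * trace (Ring.inverse m * E)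
  have hopen : IsOpen {m : Matrix (Fin d) (Fin d) ℝ | m.det ≠ 0} := by
    have hc : Continuous fun m : Matrix (Fin d) (Fin d) ℝ => m.det := by
      rw [continuous_iff_continuousAt]
      exact fun m => (hasFDerivAt_det' m).differentiableAt.continuousAt
    exact isOpen_ne.preimage hc
  have hmem : x ∈ {m : Matrix (Fin d) (Fin d) ℝ | m.det ≠ 0} := hdetx
  have hev : (fun m : Matrix (Fin d) (Fin d) ℝ =>
        m.det * ((Ring.inverse m * E).trace))
      =ᶠ[nhds x] fun m => (m.adjugate * E).trace := by
    filter_upwards [hopen.mem_nhds hmem] with m hm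
    have hmu : IsUnit m := (Matrix.isUnit_iff_isUnit_det m).2 (isUnit_iff_ne_zero.2 hm)
    rw [← Matrix.nonsing_inv_eq_ringInverse]
    have : m.det • m⁻¹ = m.adjugate := by
      rw [Matrix.inv_def, smul_smul, Ring.inverse_eq_inv', mul_inv_cancel₀ hm, one_smul]
    rw [← this]
    simp [Matrix.smul_mul]
  rw [← hev.fderiv_eq]
  -- Step 3: compute the derivative of det m * trace (Ring.inverse m * E)
  let u : (Matrix (Fin d) (Fin d) ℝ)ˣ := hxu.unit
  have hu : (u : Matrix (Fin d) (Fin d) ℝ) = x := rfl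
  have hui : ((u⁻¹ : (Matrix (Fin d) (Fin d) ℝ)ˣ) : Matrix (Fin d) (Fin d) ℝ) = x⁻¹ := by
    rw [Matrix.coe_units_inv, hu]
  have hinv : HasFDerivAt (Ring.inverse :
        Matrix (Fin d) (Fin d) ℝ → Matrix (Fin d) (Fin d) ℝ)
      (-(ContinuousLinearMap.mulLeftRight ℝ _ x⁻¹ x⁻¹)) x := by
    have := hasFDerivAt_ringInverse (𝕜 := ℝ) u
    rwa [hu, hui] at this
  have htr : HasFDerivAt (fun m : Matrix (Fin d) (Fin d) ℝ => (Ring.inverse m * E).trace)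
      ((trMulCLM E).comp (-(ContinuousLinearMap.mulLeftRight ℝ _ x⁻¹ x⁻¹))) x :=
    (trMulCLM E).hasFDerivAt.comp x hinv
  have hmul : HasFDerivAt (fun m : Matrix (Fin d) (Fin d) ℝ =>
        m.det * ((Ring.inverse m * E).trace)) _ x :=
    (hasFDerivAt_det' x).mul htr
  rw [hmul.fderiv]
  -- Step 4: numeric evaluation
  have hadj : ∀ p q : Fin d, x.adjugate p q = x.det * x⁻¹ p q := by
    intro p q
    have := congrFun (congrFun (Matrix.inv_def x) p) q
    rw [Ring.inverse_eq_inv'] at this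
    simp only [Matrix.smul_apply, smul_eq_mul] at this
    rw [this]
    field_simp
  have hsymm : ∀ p q : Fin d, x⁻¹ p q = x⁻¹ q p := by
    intro p q
    have h := hx.1.inv
    have := congrFun (congrFun h.symm p) q
    simpa [Matrix.conjTranspose_apply] using this
  simp only [ContinuousLinearMap.add_apply, ContinuousLinearMap.smul_apply,
    ContinuousLinearMap.coe_comp', Function.comp_apply, ContinuousLinearMap.neg_apply,
    ContinuousLinearMap.mulLeftRight_apply, trMulCLM_apply, detDerivCLM_apply, smul_eq_mul,
    ← Matrix.nonsing_inv_eq_ringInverse]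
  have e1 : (x⁻¹ * E).trace = x⁻¹ l k := by
    simp [hE, Matrix.trace, Matrix.diag, Matrix.mul_apply, Matrix.single,
      Finset.sum_ite_eq, Finset.sum_ite_eq', ite_and]
  have e2 : (x.adjugate * Matrix.single i j 1).trace = x.adjugate j i := by
    simp [Matrix.trace, Matrix.diag, Matrix.mul_apply, Matrix.single,
      Finset.sum_ite_eq, Finset.sum_ite_eq', ite_and]
  have e3 : (x⁻¹ * Matrix.single i j 1 * x⁻¹ * E).trace
      = x⁻¹ l i * x⁻¹ j k := by
    simp [hE, Matrix.trace, Matrix.diag, Matrix.mul_apply, Matrix.single,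
      Finset.sum_ite_eq, Finset.sum_ite_eq', ite_and, Finset.mul_sum, Finset.sum_mul]
  change x.det * (-(x⁻¹ * Matrix.single i j 1 * x⁻¹) * E).trace
      + (x⁻¹ * E).trace * (x.adjugate * Matrix.single i j 1).trace = _
  rw [Matrix.neg_mul, Matrix.trace_neg, e1, e2, e3, hadj]
  rw [hsymm l k, hsymm j i, hsymm l i]
  ring

end aux

/-- For a symmetric positive definite real `d × d` matrix `x`, the second partial derivatives of
the determinant satisfy
`∂² det / (∂ x_{ij} ∂ x_{kl}) = det x * ((x⁻¹)_{kl} (x⁻¹)_{ij} − (x⁻¹)_{il} (x⁻¹)_{jk})`. -/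
theorem det_second_partial_deriv_posDef {d : ℕ}
    (x : Matrix (Fin d) (Fin d) ℝ) (hx : x.PosDef) (i j k l : Fin d) :
    fderiv ℝ (fun m : Matrix (Fin d) (Fin d) ℝ =>
        fderiv ℝ (fun m' : Matrix (Fin d) (Fin d) ℝ => m'.det) m
          (Matrix.single k l 1)) x (Matrix.single i j 1)
      = x.det * (x⁻¹ k l * x⁻¹ i j - x⁻¹ i l * x⁻¹ j k) :=
  det_second_partial_deriv_posDef_aux x hx i j k l
end

section
/- Let x be a symmetric positive definite real d×d matrix, A a symmetric positive semidefinite real d×d matrix, and α ∈ [1/2, 1]. Then Tr(x^{2α−2} A) ≤ Tr(x^{2α−1}) · Tr(A x^{-1}). -/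
open Matrix

/-- The real power `x ^ r` of a Hermitian matrix, via spectral decomposition. -/
noncomputable def matRpow {d : ℕ} {x : Matrix (Fin d) (Fin d) ℝ} (hx : x.IsHermitian) (r : ℝ) :
    Matrix (Fin d) (Fin d) ℝ :=
  (hx.eigenvectorUnitary : Matrix (Fin d) (Fin d) ℝ) *
    Matrix.diagonal (fun i => hx.eigenvalues i ^ r) *
    star (hx.eigenvectorUnitary : Matrix (Fin d) (Fin d) ℝ)

/-- For `x` symmetric positive definite, `A` symmetric positive semidefinite, and
`α ∈ [1/2, 1]`: `Tr (x^{2α−2} A) ≤ Tr (x^{2α−1}) * Tr (A x⁻¹)`. -/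
theorem trace_rpow_mul_le {d : ℕ} (x A : Matrix (Fin d) (Fin d) ℝ) (hx : x.PosDef)
    (hA : A.PosSemidef) (α : ℝ) (hα : α ∈ Set.Icc (1 / 2 : ℝ) 1) :
    (matRpow hx.1 (2 * α - 2) * A).trace ≤
      (matRpow hx.1 (2 * α - 1)).trace * (A * x⁻¹).trace := by
  set U : Matrix (Fin d) (Fin d) ℝ := (hx.1.eigenvectorUnitary : Matrix (Fin d) (Fin d) ℝ)
    with hUdef
  have hU1 : U * star U = 1 := Matrix.mem_unitaryGroup_iff.mp hx.1.eigenvectorUnitary.2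
  have hU2 : star U * U = 1 := Matrix.mem_unitaryGroup_iff'.mp hx.1.eigenvectorUnitary.2
  set lam : Fin d → ℝ := hx.1.eigenvalues with hlam
  have hlampos : ∀ i, 0 < lam i := fun i => hx.eigenvalues_pos i
  set C : Matrix (Fin d) (Fin d) ℝ := star U * A * U with hC
  have hCpsd : C.PosSemidef := by
    simpa [hC, Matrix.star_eq_conjTranspose] using hA.conjTranspose_mul_mul_same U
  have hCdiag : ∀ i, 0 ≤ C i i := by
    intro i
    exact hCpsd.diag_nonneg
  -- general trace formula
  have key : ∀ (f : Fin d → ℝ) (B : Matrix (Fin d) (Fin d) ℝ),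
      (U * Matrix.diagonal f * star U * B).trace = ∑ i, f i * (star U * B * U) i i := by
    intro f B
    have e1 : U * Matrix.diagonal f * star U * B = (U * Matrix.diagonal f) * (star U * B) := by
      simp only [Matrix.mul_assoc]
    have e2 : (star U * B) * (U * Matrix.diagonal f)
        = (star U * B * U) * Matrix.diagonal f := by
      simp only [Matrix.mul_assoc]
    rw [e1, Matrix.trace_mul_comm, e2, Matrix.trace_mul_comm, Matrix.trace]
    simp [Matrix.diag, Matrix.diagonal_mul]
  have key2 : ∀ f : Fin d → ℝ, (U * Matrix.diagonal f * star U).trace = ∑ i, f i := by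
    intro f
    rw [Matrix.trace_mul_cycle, hU2, Matrix.one_mul, Matrix.trace_diagonal]
  -- inverse of x
  have hxinv : x⁻¹ = U * Matrix.diagonal (fun i => (lam i)⁻¹) * star U := by
    have hxeq : x = U * Matrix.diagonal lam * star U := by
      simpa [hUdef, Function.comp] using hx.1.spectral_theorem
    have h : x * (U * Matrix.diagonal (fun i => (lam i)⁻¹) * star U) = 1 := by
      rw [hxeq]
      have e : U * Matrix.diagonal lam * star U * (U * Matrix.diagonal (fun i => (lam i)⁻¹)
          * star U) = U * (Matrix.diagonal lam * ((star U * U) * Matrix.diagonal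
          (fun i => (lam i)⁻¹))) * star U := by
        simp only [Matrix.mul_assoc]
      rw [e, hU2, Matrix.one_mul, Matrix.diagonal_mul_diagonal]
      have e2 : (fun i => lam i * (lam i)⁻¹) = fun _ => (1 : ℝ) := by
        funext i; exact mul_inv_cancel₀ (hlampos i).ne'
      rw [e2, Matrix.diagonal_one, Matrix.mul_one, hU1]
    exact Matrix.inv_eq_right_inv h
  -- compute the three traces
  have h1 : (matRpow hx.1 (2 * α - 2) * A).trace = ∑ i, lam i ^ (2 * α - 2) * C i i := by
    rw [matRpow]; exact key _ _
  have h2 : (matRpow hx.1 (2 * α - 1)).trace = ∑ i, lam i ^ (2 * α - 1) := by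
    rw [matRpow]; exact key2 _
  have h3 : (A * x⁻¹).trace = ∑ i, (lam i)⁻¹ * C i i := by
    rw [Matrix.trace_mul_comm, hxinv]; exact key _ _
  rw [h1, h2, h3, Finset.mul_sum]
  apply Finset.sum_le_sum
  intro i _
  have hsplit : lam i ^ (2 * α - 2) = lam i ^ (2 * α - 1) * (lam i)⁻¹ := by
    rw [← Real.rpow_neg_one (lam i), ← Real.rpow_add (hlampos i)]
    ring_nf
  rw [hsplit]
  have hle : lam i ^ (2 * α - 1) ≤ ∑ j, lam j ^ (2 * α - 1) :=
    Finset.single_le_sum (fun j _ => Real.rpow_nonneg (hlampos j).le _) (Finset.mem_univ i)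
  have hnn : 0 ≤ (lam i)⁻¹ * C i i :=
    mul_nonneg (inv_nonneg.mpr (hlampos i).le) (hCdiag i)
  calc lam i ^ (2 * α - 1) * (lam i)⁻¹ * C i i
      = lam i ^ (2 * α - 1) * ((lam i)⁻¹ * C i i) := by ring
    _ ≤ (∑ j, lam j ^ (2 * α - 1)) * ((lam i)⁻¹ * C i i) :=
        mul_le_mul_of_nonneg_right hle hnn
end

section
/- Let f, g be symmetric real d×d matrices and x a symmetric positive definite real d×d matrix. Then (1/2)·Σ_{i,j,k,l} [(x^{-1})_{kl}(x^{-1})_{ij} − (x^{-1})_{il}(x^{-1})_{jk}]·[f_{ik}g_{jl} + f_{il}g_{jk} + f_{jk}g_{il} + f_{jl}g_{ik}] = Tr(f x^{-1} g x^{-1}) − Tr(f x^{-1})·Tr(g x^{-1}). -/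
open Matrix Finset

section Aux
variable {d : ℕ}

private lemma s12 (M : Fin d → Fin d → Fin d → Fin d → ℝ) :
    (∑ i, ∑ j, ∑ k, ∑ l, M i j k l) = ∑ i, ∑ j, ∑ k, ∑ l, M j i k l :=
  Finset.sum_comm

private lemma s23 (M : Fin d → Fin d → Fin d → Fin d → ℝ) :
    (∑ i, ∑ j, ∑ k, ∑ l, M i j k l) = ∑ i, ∑ j, ∑ k, ∑ l, M i k j l :=
  Finset.sum_congr rfl fun _ _ => Finset.sum_comm

private lemma s34 (M : Fin d → Fin d → Fin d → Fin d → ℝ) :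
    (∑ i, ∑ j, ∑ k, ∑ l, M i j k l) = ∑ i, ∑ j, ∑ k, ∑ l, M i j l k :=
  Finset.sum_congr rfl fun _ _ => Finset.sum_congr rfl fun _ _ => Finset.sum_comm

private lemma p_iklj (M : Fin d → Fin d → Fin d → Fin d → ℝ) :
    (∑ i, ∑ j, ∑ k, ∑ l, M i k l j) = ∑ i, ∑ j, ∑ k, ∑ l, M i j k l :=
  calc (∑ i, ∑ j, ∑ k, ∑ l, M i k l j)
      = ∑ i, ∑ j, ∑ k, ∑ l, M i j l k := s23 _
    _ = ∑ i, ∑ j, ∑ k, ∑ l, M i j k l := s34 _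

private lemma p_ilkj (M : Fin d → Fin d → Fin d → Fin d → ℝ) :
    (∑ i, ∑ j, ∑ k, ∑ l, M i l k j) = ∑ i, ∑ j, ∑ k, ∑ l, M i j k l :=
  calc (∑ i, ∑ j, ∑ k, ∑ l, M i l k j)
      = ∑ i, ∑ j, ∑ k, ∑ l, M i k l j := s34 _
    _ = ∑ i, ∑ j, ∑ k, ∑ l, M i j k l := p_iklj _

private lemma p_jkli (M : Fin d → Fin d → Fin d → Fin d → ℝ) :
    (∑ i, ∑ j, ∑ k, ∑ l, M j k l i) = ∑ i, ∑ j, ∑ k, ∑ l, M i j k l :=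
  calc (∑ i, ∑ j, ∑ k, ∑ l, M j k l i)
      = ∑ i, ∑ j, ∑ k, ∑ l, M i k l j := s12 _
    _ = ∑ i, ∑ j, ∑ k, ∑ l, M i j k l := p_iklj _

private lemma p_jlki (M : Fin d → Fin d → Fin d → Fin d → ℝ) :
    (∑ i, ∑ j, ∑ k, ∑ l, M j l k i) = ∑ i, ∑ j, ∑ k, ∑ l, M i j k l :=
  calc (∑ i, ∑ j, ∑ k, ∑ l, M j l k i)
      = ∑ i, ∑ j, ∑ k, ∑ l, M i l k j := s12 _
    _ = ∑ i, ∑ j, ∑ k, ∑ l, M i j k l := p_ilkj _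

private lemma p_ikjl (M : Fin d → Fin d → Fin d → Fin d → ℝ) :
    (∑ i, ∑ j, ∑ k, ∑ l, M i k j l) = ∑ i, ∑ j, ∑ k, ∑ l, M i j k l :=
  (s23 _).symm

private lemma p_jlik (M : Fin d → Fin d → Fin d → Fin d → ℝ) :
    (∑ i, ∑ j, ∑ k, ∑ l, M j l i k) = ∑ i, ∑ j, ∑ k, ∑ l, M i j k l :=
  calc (∑ i, ∑ j, ∑ k, ∑ l, M j l i k)
      = ∑ i, ∑ j, ∑ k, ∑ l, M i l j k := s12 _
    _ = ∑ i, ∑ j, ∑ k, ∑ l, M i l k j := s23 _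
    _ = ∑ i, ∑ j, ∑ k, ∑ l, M i j k l := p_ilkj _

/-- factored double-product sum -/
private lemma p_prod (u v : Fin d → Fin d → ℝ) :
    (∑ i, ∑ j, ∑ k, ∑ l, u i l * v j k)
      = (∑ i, ∑ l, u i l) * (∑ j, ∑ k, v j k) := by
  calc (∑ i : Fin d, ∑ j : Fin d, ∑ k : Fin d, ∑ l : Fin d, u i l * v j k)
      = ∑ i : Fin d, ∑ j : Fin d, ∑ k : Fin d, ∑ l : Fin d, u i k * v j l := s34 _
    _ = (∑ i, ∑ l, u i l) * (∑ j, ∑ k, v j k) := by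
        rw [Finset.sum_mul_sum]
        exact Finset.sum_congr rfl fun i _ => Finset.sum_congr rfl fun j _ => by
          rw [Finset.sum_mul_sum]

private lemma core (A f g : Matrix (Fin d) (Fin d) ℝ)
    (hA : ∀ i j, A i j = A j i) (_hf : ∀ i j, f i j = f j i) (hg : ∀ i j, g i j = g j i) :
    (1 / 2 : ℝ) * ∑ i : Fin d, ∑ j : Fin d, ∑ k : Fin d, ∑ l : Fin d,
        (A k l * A i j - A i l * A j k) *
          (f i k * g j l + f i l * g j k + f j k * g i l + f j l * g i k)
      = (f * A * g * A).trace - (f * A).trace * (g * A).trace := by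
  set M : Fin d → Fin d → Fin d → Fin d → ℝ :=
    fun a b c e => f a b * A b c * g c e * A e a with hM
  have hT : (f * A * g * A).trace = ∑ i, ∑ j, ∑ k, ∑ l, M i j k l := by
    simp only [Matrix.trace, Matrix.mul_apply, Matrix.diag, Finset.sum_mul, hM]
    exact p_ilkj _
  have htf : (f * A).trace = ∑ i, ∑ j, f i j * A j i := by
    simp [Matrix.trace, Matrix.mul_apply, Matrix.diag]
  have htg : (g * A).trace = ∑ i, ∑ j, g i j * A j i := by
    simp [Matrix.trace, Matrix.mul_apply, Matrix.diag]
  -- the eight terms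
  have e1 : (∑ i, ∑ j, ∑ k, ∑ l, A k l * A i j * (f i k * g j l))
      = ∑ i, ∑ j, ∑ k, ∑ l, M i j k l := by
    rw [← p_iklj M]
    refine Finset.sum_congr rfl fun i _ => Finset.sum_congr rfl fun j _ =>
      Finset.sum_congr rfl fun k _ => Finset.sum_congr rfl fun l _ => ?_
    simp only [hM]; rw [hA i j, hg j l]; ring
  have e2 : (∑ i, ∑ j, ∑ k, ∑ l, A k l * A i j * (f i l * g j k))
      = ∑ i, ∑ j, ∑ k, ∑ l, M i j k l := by
    rw [← p_ilkj M]
    refine Finset.sum_congr rfl fun i _ => Finset.sum_congr rfl fun j _ =>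
      Finset.sum_congr rfl fun k _ => Finset.sum_congr rfl fun l _ => ?_
    simp only [hM]; rw [hA i j, hg j k, hA k l]; ring
  have e3 : (∑ i, ∑ j, ∑ k, ∑ l, A k l * A i j * (f j k * g i l))
      = ∑ i, ∑ j, ∑ k, ∑ l, M i j k l := by
    rw [← p_jkli M]
    refine Finset.sum_congr rfl fun i _ => Finset.sum_congr rfl fun j _ =>
      Finset.sum_congr rfl fun k _ => Finset.sum_congr rfl fun l _ => ?_
    simp only [hM]; rw [hg i l]; ring
  have e4 : (∑ i, ∑ j, ∑ k, ∑ l, A k l * A i j * (f j l * g i k))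
      = ∑ i, ∑ j, ∑ k, ∑ l, M i j k l := by
    rw [← p_jlki M]
    refine Finset.sum_congr rfl fun i _ => Finset.sum_congr rfl fun j _ =>
      Finset.sum_congr rfl fun k _ => Finset.sum_congr rfl fun l _ => ?_
    simp only [hM]; rw [hg i k, hA k l]; ring
  have e5 : (∑ i, ∑ j, ∑ k, ∑ l, A i l * A j k * (f i k * g j l))
      = ∑ i, ∑ j, ∑ k, ∑ l, M i j k l := by
    rw [← p_ikjl M]
    refine Finset.sum_congr rfl fun i _ => Finset.sum_congr rfl fun j _ =>
      Finset.sum_congr rfl fun k _ => Finset.sum_congr rfl fun l _ => ?_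
    simp only [hM]; rw [hA i l, hA j k]; ring
  have e8 : (∑ i, ∑ j, ∑ k, ∑ l, A i l * A j k * (f j l * g i k))
      = ∑ i, ∑ j, ∑ k, ∑ l, M i j k l := by
    rw [← p_jlik M]
    refine Finset.sum_congr rfl fun i _ => Finset.sum_congr rfl fun j _ =>
      Finset.sum_congr rfl fun k _ => Finset.sum_congr rfl fun l _ => ?_
    simp only [hM]; rw [hA j k, hA i l]; ring
  have e6 : (∑ i, ∑ j, ∑ k, ∑ l, A i l * A j k * (f i l * g j k))
      = (∑ i, ∑ j, f i j * A j i) * (∑ i, ∑ j, g i j * A j i) := by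
    rw [← p_prod (fun a b => f a b * A b a) (fun a b => g a b * A b a)]
    refine Finset.sum_congr rfl fun i _ => Finset.sum_congr rfl fun j _ =>
      Finset.sum_congr rfl fun k _ => Finset.sum_congr rfl fun l _ => ?_
    rw [hA i l, hA j k]; ring
  have e7 : (∑ i, ∑ j, ∑ k, ∑ l, A i l * A j k * (f j k * g i l))
      = (∑ i, ∑ j, g i j * A j i) * (∑ i, ∑ j, f i j * A j i) := by
    rw [← p_prod (fun a b => g a b * A b a) (fun a b => f a b * A b a)]
    refine Finset.sum_congr rfl fun i _ => Finset.sum_congr rfl fun j _ =>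
      Finset.sum_congr rfl fun k _ => Finset.sum_congr rfl fun l _ => ?_
    rw [hA i l, hA j k]; ring
  have hsplit : (∑ i : Fin d, ∑ j : Fin d, ∑ k : Fin d, ∑ l : Fin d,
        (A k l * A i j - A i l * A j k) *
          (f i k * g j l + f i l * g j k + f j k * g i l + f j l * g i k))
      = (∑ i, ∑ j, ∑ k, ∑ l, A k l * A i j * (f i k * g j l))
        + (∑ i, ∑ j, ∑ k, ∑ l, A k l * A i j * (f i l * g j k))
        + (∑ i, ∑ j, ∑ k, ∑ l, A k l * A i j * (f j k * g i l))
        + (∑ i, ∑ j, ∑ k, ∑ l, A k l * A i j * (f j l * g i k))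
        - (∑ i, ∑ j, ∑ k, ∑ l, A i l * A j k * (f i k * g j l))
        - (∑ i, ∑ j, ∑ k, ∑ l, A i l * A j k * (f i l * g j k))
        - (∑ i, ∑ j, ∑ k, ∑ l, A i l * A j k * (f j k * g i l))
        - (∑ i, ∑ j, ∑ k, ∑ l, A i l * A j k * (f j l * g i k)) := by
    simp only [← Finset.sum_add_distrib, ← Finset.sum_sub_distrib]
    exact Finset.sum_congr rfl fun i _ => Finset.sum_congr rfl fun j _ =>
      Finset.sum_congr rfl fun k _ => Finset.sum_congr rfl fun l _ => by ring
  rw [hsplit, e1, e2, e3, e4, e5, e6, e7, e8, hT, htf, htg]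
  ring
end Aux

/-- The quadratic-variation summation identity: for `f`, `g` symmetric and `x` symmetric positive
definite,
`(1/2) Σ_{i,j,k,l} [(x⁻¹)_{kl}(x⁻¹)_{ij} − (x⁻¹)_{il}(x⁻¹)_{jk}] ·
  [f_{ik} g_{jl} + f_{il} g_{jk} + f_{jk} g_{il} + f_{jl} g_{ik}]
  = Tr (f x⁻¹ g x⁻¹) − Tr (f x⁻¹) Tr (g x⁻¹)`. -/
theorem quadratic_variation_sum_identity {d : ℕ} (f g x : Matrix (Fin d) (Fin d) ℝ)
    (hf : f.IsSymm) (hg : g.IsSymm) (hx : x.PosDef) :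
    (1 / 2 : ℝ) * ∑ i : Fin d, ∑ j : Fin d, ∑ k : Fin d, ∑ l : Fin d,
        (x⁻¹ k l * x⁻¹ i j - x⁻¹ i l * x⁻¹ j k) *
          (f i k * g j l + f i l * g j k + f j k * g i l + f j l * g i k)
      = (f * x⁻¹ * g * x⁻¹).trace - (f * x⁻¹).trace * (g * x⁻¹).trace := by
  have hxinv : (x⁻¹).IsSymm := by
    have h : xᵀ = x := by
      have := hx.isHermitian.eq
      simpa [Matrix.conjTranspose_eq_transpose_of_trivial, Matrix.IsSymm] using this
    rw [Matrix.IsSymm, Matrix.transpose_nonsing_inv, h]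
  exact core x⁻¹ f g (fun i j => hxinv.apply j i)
    (fun i j => hf.apply j i) (fun i j => hg.apply j i)
end
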